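/- With this setup, for every p with 1 ≤ p < ∞, every g ∈ Γ, and every f ∈ ℓ_p(X), one has lim_{t→0} ‖π_t(g)f − π_0(g)f‖_p = 0; that is, π_t(g) converges to π_0(g) in the strong operator topology as t → 0 (here (π_0(g)f)(x) = f(σ(g⁻¹x))). -/

import Mathlib

/-!
STATEMENT 12: With the coset-representative setup, for every `1 ≤ p < ∞`, every `g ∈ Γ`
and every `f ∈ ℓ_p(X)`, one has `lim_{t→0} ‖π_t(g)f − π_0(g)f‖_p = 0`: the operators
`π_t(g)` converge to `π_0(g)` in the strong operator topology as `t → 0`.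
-/

noncomputable section
open scoped ENNReal

theorem pi_t_tendsto_pi_zero
    {Γ : Type*} [Group Γ] (a : Γ) (hinf : ∀ n : ℤ, a ^ n = 1 → n = 0)
    (X : Set Γ) (heX : (1 : Γ) ∈ X)
    (σ : Γ → Γ) (κ : Γ → ℤ)
    (hσX : ∀ g : Γ, σ g ∈ X)
    (hfac : ∀ g : Γ, g = σ g * a ^ κ g)
    (huniq : ∀ g x : Γ, x ∈ X → ∀ n : ℤ, g = x * a ^ n → x = σ g ∧ n = κ g)
    (p : ℝ≥0∞) [Fact (1 ≤ p)] (hp : p ≠ ∞)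
    (Pt : ℝ → Γ → (lp (fun _ : X => ℂ) p ≃ₗᵢ[ℂ] lp (fun _ : X => ℂ) p))
    (hPt : ∀ (t : ℝ) (g : Γ) (f : lp (fun _ : X => ℂ) p) (x : X),
      (Pt t g f) x =
        Complex.exp (2 * Real.pi * t * (κ (g⁻¹ * (x : Γ))) * Complex.I) *
          f ⟨σ (g⁻¹ * (x : Γ)), hσX _⟩) :
    ∀ (g : Γ) (f : lp (fun _ : X => ℂ) p),
      Filter.Tendsto (fun t : ℝ => ‖Pt t g f - Pt 0 g f‖) (nhds 0) (nhds 0) := by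
  intro g f
  have hq : 0 < p.toReal := by
    refine ENNReal.toReal_pos ?_ hp
    have h1 : (1 : ℝ≥0∞) ≤ p := Fact.out
    intro h0; rw [h0] at h1; exact absurd h1 (by simp)
  set q := p.toReal with hqdef
  set h : X → ℂ := fun x => f ⟨σ (g⁻¹ * (x : Γ)), hσX _⟩ with hh
  have hPt0 : ∀ x : X, (Pt 0 g f) x = h x := by
    intro x; rw [hPt]; simp [hh]
  have hexp_norm : ∀ (t : ℝ) (x : X),
      ‖Complex.exp (2 * Real.pi * t * (κ (g⁻¹ * (x : Γ))) * Complex.I)‖ = 1 := by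
    intro t x
    rw [Complex.norm_exp]
    simp
  have key : ∀ (t : ℝ) (x : X), ‖(Pt t g f) x - (Pt 0 g f) x‖
      = ‖Complex.exp (2 * Real.pi * t * (κ (g⁻¹ * (x : Γ))) * Complex.I) - 1‖ * ‖h x‖ := by
    intro t x
    rw [hPt, hPt0]
    have hfx : (f : ∀ _ : X, ℂ) ⟨σ (g⁻¹ * (x : Γ)), hσX _⟩ = h x := rfl
    rw [hfx, show Complex.exp (2 * Real.pi * t * (κ (g⁻¹ * (x : Γ))) * Complex.I) * h x - h x
        = (Complex.exp (2 * Real.pi * t * (κ (g⁻¹ * (x : Γ))) * Complex.I) - 1) * h x by ring]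
    exact norm_mul _ _
  have hdiff_le : ∀ (t : ℝ) (x : X), ‖(Pt t g f) x - (Pt 0 g f) x‖ ≤ 2 * ‖h x‖ := by
    intro t x
    rw [key]
    refine mul_le_mul_of_nonneg_right ?_ (norm_nonneg _)
    calc ‖Complex.exp (2 * Real.pi * t * (κ (g⁻¹ * (x : Γ))) * Complex.I) - 1‖
        ≤ ‖Complex.exp (2 * Real.pi * t * (κ (g⁻¹ * (x : Γ))) * Complex.I)‖ + ‖(1 : ℂ)‖ :=
          norm_sub_le _ _
      _ = 2 := by rw [hexp_norm]; norm_num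
  -- summability of the dominating function
  have hsum_h : Summable fun x : X => ‖(Pt 0 g f) x‖ ^ q := (lp.memℓp (Pt 0 g f)).summable hq
  have hsum_h' : Summable fun x : X => ‖h x‖ ^ q := by
    refine hsum_h.congr fun x => ?_
    rw [hPt0]
  have hsum_bound : Summable fun x : X => (2 : ℝ) ^ q * ‖h x‖ ^ q := hsum_h'.mul_left _
  -- pointwise convergence
  have hpt : ∀ x : X, Filter.Tendsto (fun t : ℝ => ‖(Pt t g f) x - (Pt 0 g f) x‖ ^ q)
      (nhds 0) (nhds 0) := by
    intro x
    have hc : Filter.Tendsto (fun t : ℝ =>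
        Complex.exp (2 * Real.pi * t * (κ (g⁻¹ * (x : Γ))) * Complex.I)) (nhds 0)
        (nhds 1) := by
      have hcont : Continuous (fun t : ℝ =>
          Complex.exp (2 * Real.pi * t * (κ (g⁻¹ * (x : Γ))) * Complex.I)) := by
        apply Complex.continuous_exp.comp
        fun_prop
      have := hcont.tendsto 0
      simpa using this
    have hd : Filter.Tendsto (fun t : ℝ => ‖(Pt t g f) x - (Pt 0 g f) x‖) (nhds 0)
        (nhds 0) := by
      have : Filter.Tendsto (fun t : ℝ =>
          ‖Complex.exp (2 * Real.pi * t * (κ (g⁻¹ * (x : Γ))) * Complex.I) - 1‖ * ‖h x‖)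
          (nhds 0) (nhds (‖(1 : ℂ) - 1‖ * ‖h x‖)) :=
        (((hc.sub tendsto_const_nhds).norm).mul_const _)
      simp only [sub_self, norm_zero, zero_mul] at this
      refine this.congr fun t => ?_
      rw [key]
    have hrpow : Filter.Tendsto (fun s : ℝ => s ^ q) (nhds 0) (nhds 0) := by
      have := (Real.continuousAt_rpow_const 0 q (Or.inr hq.le)).tendsto
      rwa [Real.zero_rpow hq.ne'] at this
    exact hrpow.comp hd
  -- dominated convergence
  have hS : Filter.Tendsto (fun t : ℝ => ∑' x : X, ‖(Pt t g f) x - (Pt 0 g f) x‖ ^ q)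
      (nhds 0) (nhds 0) := by
    have := tendsto_tsum_of_dominated_convergence (𝓕 := nhds (0 : ℝ))
      (f := fun t (x : X) => ‖(Pt t g f) x - (Pt 0 g f) x‖ ^ q)
      (g := fun _ : X => (0 : ℝ))
      (bound := fun x : X => (2 : ℝ) ^ q * ‖h x‖ ^ q)
      hsum_bound hpt ?_
    · simpa using this
    · refine Filter.Eventually.of_forall fun t x => ?_
      show ‖‖(Pt t g f) x - (Pt 0 g f) x‖ ^ q‖ ≤ 2 ^ q * ‖h x‖ ^ q
      rw [Real.norm_eq_abs, abs_of_nonneg (Real.rpow_nonneg (norm_nonneg _) _),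
        ← Real.mul_rpow (by norm_num) (norm_nonneg _)]
      exact Real.rpow_le_rpow (norm_nonneg _) (hdiff_le t x) hq.le
  -- assemble
  have hnorm : ∀ t : ℝ, ‖Pt t g f - Pt 0 g f‖
      = (∑' x : X, ‖(Pt t g f) x - (Pt 0 g f) x‖ ^ q) ^ (1 / q) := by
    intro t
    rw [lp.norm_eq_tsum_rpow hq]
    rfl
  have hrpow : Filter.Tendsto (fun s : ℝ => s ^ (1 / q)) (nhds 0) (nhds 0) := by
    have := (Real.continuousAt_rpow_const 0 (1 / q) (Or.inr (by positivity))).tendsto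
    rwa [Real.zero_rpow (by positivity)] at this
  have : Filter.Tendsto (fun t : ℝ =>
      (∑' x : X, ‖(Pt t g f) x - (Pt 0 g f) x‖ ^ q) ^ (1 / q)) (nhds 0) (nhds 0) :=
    hrpow.comp hS
  exact this.congr fun t => (hnorm t).symm
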